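/- arXiv:1502.04061 — 3 statements merged into one kernel-verified Lean document; each statement's English description precedes it below -/
import Mathlib

section
/- In the random tournament T_n on n ≥ 2 vertices, the probability that some ordered pair of distinct vertices (u,v) has directed distance from u to v at least 3 (equivalently, the diameter of T_n is at least 3) is at most (n(n−1)/2)·(3/4)^{n−2}. -/
/-! Model of the uniform random tournament on `n` vertices.  A sample point assigns a
Boolean to every ordered pair of vertices; only the Booleans indexed by pairs `(i, j)`
with `i < j` are consulted: the edge between `i` and `j` is oriented `i → j` iff that
Boolean is `true`.  Since distinct unordered pairs consult distinct coordinates, under the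
uniform probability measure the orientations of the edges are independent and each of the
two directions has probability `1/2`. -/

/-- The sample space for the random tournament on `n` vertices. -/
abbrev TOmega (n : ℕ) := Fin n → Fin n → Bool

/-- `tadj ω i j` : in the tournament coded by `ω`, the edge between `i` and `j`
is oriented from `i` to `j`. -/
def tadj {n : ℕ} (ω : TOmega n) (i j : Fin n) : Prop :=
  i ≠ j ∧ (if i < j then ω i j = true else ω j i = false)

/-- Uniform probability of an event. -/
noncomputable def tPr {n : ℕ} (E : Set (TOmega n)) : ℝ :=
  (∑ ω : TOmega n, E.indicator (fun _ => (1 : ℝ)) ω) / (Fintype.card (TOmega n) : ℝ)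

/-- Expectation with respect to the uniform probability measure. -/
noncomputable def tEx {n : ℕ} (f : TOmega n → ℝ) : ℝ :=
  (∑ ω : TOmega n, f ω) / (Fintype.card (TOmega n) : ℝ)

/-- The first out-neighborhood of `v`: vertices at directed distance exactly 1. -/
def tN1 {n : ℕ} (ω : TOmega n) (v : Fin n) : Set (Fin n) := {w | tadj ω v w}

/-- The second out-neighborhood of `v`: vertices at directed distance exactly 2. -/
def tN2 {n : ℕ} (ω : TOmega n) (v : Fin n) : Set (Fin n) :=
  {w | w ≠ v ∧ ¬ tadj ω v w ∧ ∃ x, tadj ω v x ∧ tadj ω x w}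

/-- `v` is a Seymour vertex of the tournament coded by `ω`. -/
def tSeymour {n : ℕ} (ω : TOmega n) (v : Fin n) : Prop :=
  (tN1 ω v).ncard ≤ (tN2 ω v).ncard

/-- The number of Seymour vertices. -/
noncomputable def tS {n : ℕ} (ω : TOmega n) : ℕ := {v | tSeymour ω v}.ncard

/-- The expected number of Seymour vertices of the random tournament on `n` vertices. -/
noncomputable def tES (n : ℕ) : ℝ := tEx (fun ω : TOmega n => (tS ω : ℝ))

/-- The variance of the number of Seymour vertices of the random tournament on `n`
vertices. -/
noncomputable def tVarS (n : ℕ) : ℝ := tEx (fun ω : TOmega n => ((tS ω : ℝ) - tES n) ^ 2)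

/-- `P(Bin(m, 1/2) ≤ x)` for a real threshold `x`:  the probability that a binomial random
variable with `m` trials and success probability `1/2` is at most `x`. -/
noncomputable def binHalfCdf (m : ℕ) (x : ℝ) : ℝ :=
  ∑ k ∈ Finset.range (m + 1), if (k : ℝ) ≤ x then (m.choose k : ℝ) * (1 / 2) ^ m else 0

def dd {n : ℕ} (ω : TOmega n) (i j : Fin n) : Bool := if i < j then ω i j else !(ω j i)
def dflip {n : ℕ} (p q : Fin n) (ω : TOmega n) : TOmega n :=
  fun i j => if i = p ∧ j = q then !(ω i j) else ω i j
lemma dflip_invol {n : ℕ} (p q : Fin n) : Function.Involutive (dflip p q) := by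
  intro ω; funext i j; by_cases h : i = p ∧ j = q <;> simp [dflip, h]
def cflip {n : ℕ} (a b : Fin n) (ω : TOmega n) : TOmega n :=
  if a < b then dflip a b ω else dflip b a ω
lemma cflip_invol {n : ℕ} (a b : Fin n) : Function.Involutive (cflip a b) := by
  intro ω; unfold cflip; split_ifs with h <;> exact dflip_invol _ _ ω
lemma dd_cflip_same {n : ℕ} (a b : Fin n) (h : a ≠ b) (ω : TOmega n) :
    dd (cflip a b ω) a b = !(dd ω a b) := by
  rcases h.lt_or_gt with h1 | h1
  · simp [cflip, dflip, dd, h1]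
  · simp [cflip, dflip, dd, h1, h1.not_gt]
lemma dd_cflip_ne {n : ℕ} (a b i j : Fin n) (h1 : ¬(i = a ∧ j = b)) (h2 : ¬(i = b ∧ j = a))
    (ω : TOmega n) : dd (cflip a b ω) i j = dd ω i j := by
  unfold cflip dd dflip
  split_ifs <;> simp_all <;> tauto
noncomputable def cntR {n : ℕ} (u v : Fin n) (F : Finset (Fin n)) : ℝ :=
  ∑ ω : TOmega n,
    if dd ω u v = false ∧ ∀ y ∈ F, ¬(dd ω u y = true ∧ dd ω y v = true) then 1 else 0
lemma sum_comp_cflip {n : ℕ} (a b : Fin n) (g : TOmega n → ℝ) :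
    ∑ ω : TOmega n, g (cflip a b ω) = ∑ ω : TOmega n, g ω :=
  Function.Bijective.sum_comp (cflip_invol a b).bijective g

private lemma bool_not_eq (c a : Bool) : (!c = a) = (c = !a) := by
  cases c <;> cases a <;> simp

lemma cntR_insert {n : ℕ} (u v x : Fin n) (F : Finset (Fin n)) (huv : u ≠ v)
    (hxu : x ≠ u) (hxv : x ≠ v) (hxF : x ∉ F) :
    cntR u v (insert x F) = 3 / 4 * cntR u v F := by
  classical
  set T : Bool → Bool → ℝ := fun a b => ∑ ω : TOmega n,
    if (dd ω u v = false ∧ ∀ y ∈ F, ¬(dd ω u y = true ∧ dd ω y v = true))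
        ∧ dd ω u x = a ∧ dd ω x v = b then 1 else 0 with hT
  have flip1 : ∀ a b, T a b = T (!a) b := by
    intro a b
    rw [hT]
    dsimp only
    rw [← sum_comp_cflip u x (fun ω =>
      if (dd ω u v = false ∧ ∀ y ∈ F, ¬(dd ω u y = true ∧ dd ω y v = true))
          ∧ dd ω u x = !a ∧ dd ω x v = b then (1:ℝ) else 0)]
    refine Finset.sum_congr rfl fun ω _ => ?_
    have h0 : dd (cflip u x ω) u v = dd ω u v :=
      dd_cflip_ne u x u v (fun h => hxv h.2.symm) (fun h => hxu h.1.symm) ω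
    have hs : dd (cflip u x ω) u x = !(dd ω u x) := dd_cflip_same u x (Ne.symm hxu) ω
    have hxv' : dd (cflip u x ω) x v = dd ω x v :=
      dd_cflip_ne u x x v (fun h => hxu h.1) (fun h => huv h.2.symm) ω
    have hy1 : ∀ y, y ∈ F → dd (cflip u x ω) u y = dd ω u y := fun y hy =>
      dd_cflip_ne u x u y (fun h => hxF (h.2 ▸ hy)) (fun h => hxu h.1.symm) ω
    have hy2 : ∀ y, y ∈ F → dd (cflip u x ω) y v = dd ω y v := fun y hy =>
      dd_cflip_ne u x y v (fun h => hxv h.2.symm) (fun h => hxF (h.1 ▸ hy)) ω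
    simp (config := { contextual := true }) only [h0, hs, hxv', hy1, hy2]
    cases a <;> cases hdd : dd ω u x <;> simp [hdd]
  have flip2 : ∀ a b, T a b = T a (!b) := by
    intro a b
    rw [hT]
    dsimp only
    rw [← sum_comp_cflip x v (fun ω =>
      if (dd ω u v = false ∧ ∀ y ∈ F, ¬(dd ω u y = true ∧ dd ω y v = true))
          ∧ dd ω u x = a ∧ dd ω x v = !b then (1:ℝ) else 0)]
    refine Finset.sum_congr rfl fun ω _ => ?_
    have h0 : dd (cflip x v ω) u v = dd ω u v :=
      dd_cflip_ne x v u v (fun h => hxu h.1.symm) (fun h => huv h.1) ω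
    have hs : dd (cflip x v ω) x v = !(dd ω x v) := dd_cflip_same x v hxv ω
    have hux : dd (cflip x v ω) u x = dd ω u x :=
      dd_cflip_ne x v u x (fun h => hxu h.1.symm) (fun h => huv h.1) ω
    have hy1 : ∀ y, y ∈ F → dd (cflip x v ω) u y = dd ω u y := fun y hy =>
      dd_cflip_ne x v u y (fun h => hxu h.1.symm) (fun h => huv h.1) ω
    have hy2 : ∀ y, y ∈ F → dd (cflip x v ω) y v = dd ω y v := fun y hy =>
      dd_cflip_ne x v y v (fun h => hxF (h.1 ▸ hy)) (fun h => hxv h.2.symm) ω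
    simp (config := { contextual := true }) only [h0, hs, hux, hy1, hy2]
    cases b <;> cases hdd : dd ω x v <;> simp [hdd]
  have hsplit : cntR u v F = T false false + T false true + T true false + T true true := by
    unfold cntR
    rw [hT]
    dsimp only
    rw [← Finset.sum_add_distrib, ← Finset.sum_add_distrib, ← Finset.sum_add_distrib]
    refine Finset.sum_congr rfl fun ω _ => ?_
    by_cases hb : dd ω u v = false ∧ ∀ y ∈ F, ¬(dd ω u y = true ∧ dd ω y v = true)
    · cases h1 : dd ω u x <;> cases h2 : dd ω x v <;> simp [hb, h1, h2]
    · rw [if_neg hb, if_neg (fun h => hb h.1), if_neg (fun h => hb h.1),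
        if_neg (fun h => hb h.1), if_neg (fun h => hb h.1)]
      ring
  have hins : cntR u v (insert x F) = cntR u v F - T true true := by
    unfold cntR
    rw [hT]
    dsimp only
    rw [← Finset.sum_sub_distrib]
    refine Finset.sum_congr rfl fun ω _ => ?_
    simp only [Finset.forall_mem_insert]
    by_cases hb : dd ω u v = false ∧ ∀ y ∈ F, ¬(dd ω u y = true ∧ dd ω y v = true)
    · cases h1 : dd ω u x <;> cases h2 : dd ω x v <;>
        simp [hb.1, hb.2, h1, h2]
    · have h1 : ¬(dd ω u v = false ∧ (¬(dd ω u x = true ∧ dd ω x v = true) ∧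
          ∀ y ∈ F, ¬(dd ω u y = true ∧ dd ω y v = true))) := fun h => hb ⟨h.1, h.2.2⟩
      rw [if_neg h1, if_neg hb, if_neg (fun h => hb h.1), sub_self]
  have e1 : T false false = T true true := by rw [flip1, flip2]; simp
  have e2 : T false true = T true true := by rw [flip1]; simp
  have e3 : T true false = T true true := by rw [flip2]; simp
  rw [hins, hsplit, e1, e2, e3]
  ring

lemma tadj_iff_dd {n : ℕ} (ω : TOmega n) (i j : Fin n) :
    tadj ω i j ↔ i ≠ j ∧ dd ω i j = true := by
  unfold tadj dd; by_cases h : i < j <;> simp [h]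

lemma cntR_empty {n : ℕ} (u v : Fin n) (huv : u ≠ v) :
    cntR u v (∅ : Finset (Fin n)) = (Fintype.card (TOmega n) : ℝ) / 2 := by
  classical
  have hA : cntR u v ∅ = ∑ ω : TOmega n, if dd ω u v = false then (1:ℝ) else 0 := by
    unfold cntR; simp
  have hB : (∑ ω : TOmega n, if dd ω u v = false then (1:ℝ) else 0)
      = ∑ ω : TOmega n, if dd ω u v = true then (1:ℝ) else 0 := by
    calc (∑ ω : TOmega n, if dd ω u v = false then (1:ℝ) else 0)
        = ∑ ω : TOmega n, if dd (cflip u v ω) u v = false then (1:ℝ) else 0 := by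
          rw [sum_comp_cflip u v (fun ω => if dd ω u v = false then (1:ℝ) else 0)]
      _ = ∑ ω : TOmega n, if dd ω u v = true then (1:ℝ) else 0 := by
          refine Finset.sum_congr rfl fun ω _ => ?_
          rw [dd_cflip_same u v huv]
          cases h : dd ω u v <;> simp
  have hsum : (∑ ω : TOmega n, if dd ω u v = false then (1:ℝ) else 0)
      + (∑ ω : TOmega n, if dd ω u v = true then (1:ℝ) else 0)
      = (Fintype.card (TOmega n) : ℝ) := by
    have hc : (∑ _ω : TOmega n, (1:ℝ)) = (Fintype.card (TOmega n) : ℝ) := by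
      rw [Finset.sum_const, Finset.card_univ, nsmul_eq_mul, mul_one]
    rw [← hc, ← Finset.sum_add_distrib]
    refine Finset.sum_congr rfl fun ω _ => ?_
    cases h : dd ω u v <;> simp [h]
  rw [hA]
  rw [hB] at hsum ⊢
  linarith

lemma cntR_eq {n : ℕ} (u v : Fin n) (huv : u ≠ v) (F : Finset (Fin n)) :
    u ∉ F → v ∉ F →
    cntR u v F = (Fintype.card (TOmega n) : ℝ) * (1 / 2) * (3 / 4) ^ F.card := by
  classical
  induction F using Finset.induction_on with
  | empty =>
    intro _ _
    simp only [Finset.card_empty, pow_zero, mul_one]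
    rw [cntR_empty u v huv]; ring
  | @insert a s ha ih =>
    intro hu hv
    have hau : a ≠ u := fun h => hu (h ▸ Finset.mem_insert_self a s)
    have hav : a ≠ v := fun h => hv (h ▸ Finset.mem_insert_self a s)
    rw [cntR_insert u v a s huv hau hav ha,
      ih (fun h => hu (Finset.mem_insert_of_mem h)) (fun h => hv (Finset.mem_insert_of_mem h)),
      Finset.card_insert_of_notMem ha]
    ring


/-- In the random tournament on `n ≥ 2` vertices, the probability that some ordered pair of
distinct vertices `(u, v)` has directed distance from `u` to `v` at least 3 (equivalently,
the diameter is at least 3) is at most `(n(n-1)/2) * (3/4) ^ (n-2)`. -/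
theorem prob_diameter_ge_three_le (n : ℕ) (hn : 2 ≤ n) :
    tPr {ω : TOmega n | ∃ u v : Fin n, u ≠ v ∧
        ¬ tadj ω u v ∧ ∀ x, ¬ (tadj ω u x ∧ tadj ω x v)} ≤
      ((n : ℝ) * ((n : ℝ) - 1) / 2) * (3 / 4 : ℝ) ^ (n - 2) := by
  classical
  set E : Set (TOmega n) := {ω : TOmega n | ∃ u v : Fin n, u ≠ v ∧
      ¬ tadj ω u v ∧ ∀ x, ¬ (tadj ω u x ∧ tadj ω x v)} with hE
  have hcard : (0:ℝ) < (Fintype.card (TOmega n) : ℝ) := by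
    exact_mod_cast Fintype.card_pos
  have hpoint : ∀ ω : TOmega n, E.indicator (fun _ => (1:ℝ)) ω ≤
      ∑ p ∈ (Finset.univ : Finset (Fin n)).offDiag,
        (if dd ω p.1 p.2 = false ∧ ∀ y ∈ (Finset.univ \ {p.1, p.2} : Finset (Fin n)),
            ¬(dd ω p.1 y = true ∧ dd ω y p.2 = true) then (1:ℝ) else 0) := by
    intro ω
    by_cases hω : ω ∈ E
    · rw [Set.indicator_of_mem hω]
      obtain ⟨u, v, huv, h1, h2⟩ := hω
      have hmem : (u, v) ∈ (Finset.univ : Finset (Fin n)).offDiag :=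
        Finset.mem_offDiag.mpr ⟨Finset.mem_univ u, Finset.mem_univ v, huv⟩
      have hcond : dd ω u v = false ∧ ∀ y ∈ (Finset.univ \ {u, v} : Finset (Fin n)),
          ¬(dd ω u y = true ∧ dd ω y v = true) := by
        constructor
        · have hnt := (tadj_iff_dd ω u v).not.mp h1
          rcases Bool.eq_false_or_eq_true (dd ω u v) with h | h
          · exact absurd ⟨huv, h⟩ hnt
          · exact h
        · intro y hy hc
          rcases Finset.mem_sdiff.mp hy with ⟨-, hy2⟩
          simp only [Finset.mem_insert, Finset.mem_singleton, not_or] at hy2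
          exact h2 y ⟨(tadj_iff_dd ω u y).mpr ⟨fun h => hy2.1 h.symm, hc.1⟩,
            (tadj_iff_dd ω y v).mpr ⟨hy2.2, hc.2⟩⟩
      refine le_trans ?_ (Finset.single_le_sum
        (f := fun p : Fin n × Fin n =>
          if dd ω p.1 p.2 = false ∧ ∀ y ∈ (Finset.univ \ {p.1, p.2} : Finset (Fin n)),
            ¬(dd ω p.1 y = true ∧ dd ω y p.2 = true) then (1:ℝ) else 0)
        (fun p _ => by split_ifs <;> norm_num) hmem)
      dsimp only
      rw [if_pos hcond]
    · rw [Set.indicator_of_notMem hω]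
      exact Finset.sum_nonneg fun p _ => by split_ifs <;> norm_num
  have hsum : (∑ ω : TOmega n, E.indicator (fun _ => (1:ℝ)) ω) ≤
      ∑ p ∈ (Finset.univ : Finset (Fin n)).offDiag,
        cntR p.1 p.2 (Finset.univ \ {p.1, p.2}) := by
    calc (∑ ω : TOmega n, E.indicator (fun _ => (1:ℝ)) ω)
        ≤ ∑ ω : TOmega n, ∑ p ∈ (Finset.univ : Finset (Fin n)).offDiag,
            (if dd ω p.1 p.2 = false ∧ ∀ y ∈ (Finset.univ \ {p.1, p.2} : Finset (Fin n)),
              ¬(dd ω p.1 y = true ∧ dd ω y p.2 = true) then (1:ℝ) else 0) :=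
          Finset.sum_le_sum fun ω _ => hpoint ω
      _ = ∑ p ∈ (Finset.univ : Finset (Fin n)).offDiag, ∑ ω : TOmega n,
            (if dd ω p.1 p.2 = false ∧ ∀ y ∈ (Finset.univ \ {p.1, p.2} : Finset (Fin n)),
              ¬(dd ω p.1 y = true ∧ dd ω y p.2 = true) then (1:ℝ) else 0) :=
          Finset.sum_comm
      _ = ∑ p ∈ (Finset.univ : Finset (Fin n)).offDiag,
            cntR p.1 p.2 (Finset.univ \ {p.1, p.2}) := by
          refine Finset.sum_congr rfl fun p _ => ?_
          unfold cntR
          refine Finset.sum_congr rfl fun ω _ => ?_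
          congr 1
  have hval : ∀ p ∈ (Finset.univ : Finset (Fin n)).offDiag,
      cntR p.1 p.2 (Finset.univ \ {p.1, p.2})
        = (Fintype.card (TOmega n) : ℝ) * (1 / 2) * (3 / 4) ^ (n - 2) := by
    intro p hp
    obtain ⟨-, -, hne⟩ := Finset.mem_offDiag.mp hp
    have h1 : p.1 ∉ (Finset.univ \ {p.1, p.2} : Finset (Fin n)) := by simp
    have h2 : p.2 ∉ (Finset.univ \ {p.1, p.2} : Finset (Fin n)) := by simp
    rw [cntR_eq p.1 p.2 hne _ h1 h2]
    congr 2
    rw [Finset.card_sdiff_of_subset (Finset.subset_univ _), Finset.card_univ, Fintype.card_fin,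
      Finset.card_pair hne]
  have hsum2 : (∑ p ∈ (Finset.univ : Finset (Fin n)).offDiag,
        cntR p.1 p.2 (Finset.univ \ {p.1, p.2}))
      = ((n * n - n : ℕ) : ℝ) * ((Fintype.card (TOmega n) : ℝ) * (1 / 2) * (3 / 4) ^ (n - 2)) := by
    rw [Finset.sum_congr rfl hval, Finset.sum_const, Finset.offDiag_card, Finset.card_univ,
      Fintype.card_fin, nsmul_eq_mul]
  have hcast : ((n * n - n : ℕ) : ℝ) = (n : ℝ) * (n : ℝ) - (n : ℝ) := by
    have hle : n ≤ n * n := Nat.le_mul_of_pos_left n (by omega)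
    push_cast [Nat.cast_sub hle]
    ring
  rw [tPr, div_le_iff₀ hcard]
  calc (∑ ω : TOmega n, E.indicator (fun _ => (1:ℝ)) ω)
      ≤ ∑ p ∈ (Finset.univ : Finset (Fin n)).offDiag,
          cntR p.1 p.2 (Finset.univ \ {p.1, p.2}) := hsum
    _ = ((n * n - n : ℕ) : ℝ) * ((Fintype.card (TOmega n) : ℝ) * (1 / 2) * (3 / 4) ^ (n - 2)) := hsum2
    _ = ((n : ℝ) * ((n : ℝ) - 1) / 2) * (3 / 4 : ℝ) ^ (n - 2) * (Fintype.card (TOmega n) : ℝ) := by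
        rw [hcast]; ring
end

section
/- Let S_n be the number of Seymour vertices of the random tournament T_n on n ≥ 2 vertices. Then E(S_n) ≤ n·P(Bin(n−1, 1/2) ≤ (n−1)/2) + (n(n−1)/2)·(3/4)^{n−2}, where Bin(n−1,1/2) denotes a binomial random variable with n−1 trials and success probability 1/2. -/
namespace SeymourAux
open Finset

variable {n : ℕ}

/-- Coordinates relevant to vertex `v`. -/
def relP (v : Fin n) (p : Fin n × Fin n) : Prop :=
  (p.1 = v ∧ v < p.2) ∨ (p.2 = v ∧ p.1 < v)

instance (v : Fin n) : DecidablePred (relP v) := fun p => by unfold relP; infer_instance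

def idxEquiv (v : Fin n) : {w : Fin n // w ≠ v} ≃ {p : Fin n × Fin n // relP v p} where
  toFun w :=
    if h : v < w.1 then ⟨(v, w.1), Or.inl ⟨rfl, h⟩⟩
    else ⟨(w.1, v), Or.inr ⟨rfl, lt_of_le_of_ne (not_lt.1 h) w.2⟩⟩
  invFun p := ⟨if p.1.1 = v then p.1.2 else p.1.1, by
    rcases p.2 with ⟨h1, h2⟩ | ⟨h1, h2⟩
    · simp only [h1, if_pos rfl]; exact ne_of_gt h2
    · have : p.1.1 ≠ v := ne_of_lt h2
      simp only [this, if_neg this]; exact this⟩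
  left_inv w := by
    by_cases h : v < w.1
    · simp only [dif_pos h]
      exact Subtype.ext (by simp)
    · simp only [dif_neg h]
      exact Subtype.ext (by simp [w.2])
  right_inv := by
    rintro ⟨⟨a, b⟩, hp⟩
    rcases hp with ⟨h1, h2⟩ | ⟨h1, h2⟩
    · simp only at h1 h2
      subst h1
      apply Subtype.ext
      simp [h2]
    · simp only at h1 h2
      subst h1
      have hne : a ≠ b := ne_of_lt h2
      apply Subtype.ext
      simp [hne, dif_neg (not_lt.2 h2.le)]

def notEquiv : Bool ≃ Bool := ⟨Bool.not, Bool.not, Bool.not_not, Bool.not_not⟩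

noncomputable def flipEquiv (v : Fin n) :
    ({p : Fin n × Fin n // relP v p} → Bool) ≃ ({w : Fin n // w ≠ v} → Bool) :=
  (Equiv.arrowCongr (idxEquiv v).symm (Equiv.refl Bool)).trans
    (Equiv.piCongrRight fun w => if v < w.1 then Equiv.refl Bool else notEquiv)

noncomputable def bigEquiv (v : Fin n) :
    TOmega n ≃ ({w : Fin n // w ≠ v} → Bool) × ({p : Fin n × Fin n // ¬ relP v p} → Bool) :=
  ((Equiv.curry (Fin n) (Fin n) Bool).symm).trans <|
    (Equiv.piEquivPiSubtypeProd (relP v) (fun _ => Bool)).trans <|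
      Equiv.prodCongr (flipEquiv v) (Equiv.refl _)

lemma bigEquiv_fst (v : Fin n) (ω : TOmega n) (w : {w : Fin n // w ≠ v}) :
    (bigEquiv v ω).1 w = if v < w.1 then ω v w.1 else !(ω w.1 v) := by
  simp only [bigEquiv, flipEquiv, Equiv.trans_apply, Equiv.prodCongr_apply,
    Equiv.piEquivPiSubtypeProd, Equiv.curry, Equiv.coe_fn_mk, Equiv.coe_fn_symm_mk,
    Equiv.arrowCongr, Equiv.piCongrRight, Prod.map, Equiv.coe_refl]
  by_cases h : v < w.1
  · simp [idxEquiv, h, notEquiv]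
  · simp [idxEquiv, h, notEquiv]

lemma bigEquiv_fst_true_iff (v : Fin n) (ω : TOmega n) (w : {w : Fin n // w ≠ v}) :
    (bigEquiv v ω).1 w = true ↔ tadj ω v w.1 := by
  rw [bigEquiv_fst, tadj]
  have hne : v ≠ w.1 := fun h => w.2 h.symm
  by_cases h : v < w.1 <;> simp [h, hne]

instance {ω : TOmega n} {v w : Fin n} : Decidable (tadj ω v w) := by
  unfold tadj; infer_instance

lemma ncard_N1 (v : Fin n) (ω : TOmega n) :
    (tN1 ω v).ncard =
      (univ.filter fun w : {w : Fin n // w ≠ v} => (bigEquiv v ω).1 w = true).card := by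
  have h1 : tN1 ω v = ↑(univ.filter (fun w => tadj ω v w)) := by
    ext w; simp [tN1]
  rw [h1, Set.ncard_coe_finset]
  symm
  apply Finset.card_nbij (i := Subtype.val)
  · intro w hw
    simp only [mem_coe, mem_filter, mem_univ, true_and] at hw ⊢
    exact (bigEquiv_fst_true_iff v ω w).1 hw
  · exact Set.injOn_of_injective Subtype.val_injective
  · intro a ha
    simp only [coe_filter, mem_univ, true_and, Set.mem_setOf_eq] at ha
    have hav : a ≠ v := fun h => ha.1 h.symm
    exact ⟨⟨a, hav⟩, by simp [(bigEquiv_fst_true_iff v ω ⟨a, hav⟩).2 ha], rfl⟩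

lemma sum_comp_bigEquiv (f : ℕ → ℝ) (v : Fin n) :
    ∑ ω : TOmega n, f ((tN1 ω v).ncard)
      = (Fintype.card ({p : Fin n × Fin n // ¬ relP v p} → Bool) : ℝ) *
        ∑ g : {w : Fin n // w ≠ v} → Bool,
          f (univ.filter (fun w => g w = true)).card := by
  rw [← Equiv.sum_comp (bigEquiv v).symm (fun ω => f ((tN1 ω v).ncard))]
  rw [Fintype.sum_prod_type]
  have key : ∀ g h, ((tN1 ((bigEquiv v).symm (g, h)) v).ncard)
      = (univ.filter (fun w => g w = true)).card := by
    intro g h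
    rw [ncard_N1, Equiv.apply_symm_apply]
  simp_rw [key, Finset.sum_const, card_univ, nsmul_eq_mul, ← Finset.mul_sum]

def finsetBoolEquiv (α : Type*) [Fintype α] [DecidableEq α] : Finset α ≃ (α → Bool) where
  toFun s a := decide (a ∈ s)
  invFun g := univ.filter (fun a => g a = true)
  left_inv s := by ext a; simp
  right_inv g := by funext a; by_cases h : g a = true <;> simp [h]

lemma sum_boolfun (α : Type*) [Fintype α] [DecidableEq α] (f : ℕ → ℝ) :
    ∑ g : α → Bool, f (univ.filter (fun a => g a = true)).card
      = ∑ k ∈ Finset.range (Fintype.card α + 1), ((Fintype.card α).choose k : ℝ) * f k := by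
  rw [← Equiv.sum_comp (finsetBoolEquiv α)
      (fun g => f (univ.filter (fun a => g a = true)).card)]
  have hc : ∀ s : Finset α,
      (univ.filter fun a => (finsetBoolEquiv α s) a = true).card = s.card := by
    intro s; congr 1; ext a; simp [finsetBoolEquiv]
  simp_rw [hc]
  rw [← Finset.powerset_univ, Finset.sum_powerset_apply_card, card_univ]
  simp [nsmul_eq_mul]

lemma card_ne (v : Fin n) : Fintype.card {w : Fin n // w ≠ v} = n - 1 := by
  simp [Fintype.card_subtype_compl, Fintype.card_fin]

lemma seymour_deg_le {ω : TOmega n} {v : Fin n} (h : tSeymour ω v) :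
    2 * (tN1 ω v).ncard ≤ n - 1 := by
  have hdisj : Disjoint (tN1 ω v) (tN2 ω v) := by
    rw [Set.disjoint_left]
    intro w hw1 hw2
    exact hw2.2.1 hw1
  have hsub : tN1 ω v ∪ tN2 ω v ⊆ {v}ᶜ := by
    rintro w (hw | hw)
    · exact fun hc => hw.1 (Set.mem_singleton_iff.1 hc).symm
    · exact fun hc => hw.1 (Set.mem_singleton_iff.1 hc)
  have hu := Set.ncard_union_eq hdisj (Set.toFinite _) (Set.toFinite _)
  have hle : (tN1 ω v ∪ tN2 ω v).ncard ≤ ({v}ᶜ : Set (Fin n)).ncard :=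
    Set.ncard_le_ncard hsub (Set.toFinite _)
  have hcompl := Set.ncard_add_ncard_compl ({v} : Set (Fin n))
  rw [Set.ncard_singleton, Nat.card_eq_fintype_card, Fintype.card_fin] at hcompl
  have hsey : (tN1 ω v).ncard ≤ (tN2 ω v).ncard := h
  omega

open Classical in
lemma tS_eq_sum (ω : TOmega n) :
    (tS ω : ℝ) = ∑ v : Fin n, if tSeymour ω v then (1 : ℝ) else 0 := by
  have h1 : {v | tSeymour ω v}.ncard = (univ.filter (fun v => tSeymour ω v)).card := by
    rw [← Set.ncard_coe_finset]
    congr 1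
    ext w
    simp
  rw [tS, h1, Finset.sum_boole]

end SeymourAux

open SeymourAux Finset

/-- Upper bound on the expected number of Seymour vertices of the random tournament on
`n ≥ 2` vertices:
`E(S_n) ≤ n · P(Bin(n-1, 1/2) ≤ (n-1)/2) + (n(n-1)/2) · (3/4)^(n-2)`. -/
theorem expected_seymour_upper (n : ℕ) (hn : 2 ≤ n) :
    tES n ≤ (n : ℝ) * binHalfCdf (n - 1) (((n : ℝ) - 1) / 2)
      + ((n : ℝ) * ((n : ℝ) - 1) / 2) * (3 / 4 : ℝ) ^ (n - 2) := by
  classical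
  have h1n : 1 ≤ n := by omega
  have hcast : ((n - 1 : ℕ) : ℝ) = (n : ℝ) - 1 := by
    push_cast [Nat.cast_sub h1n]; ring
  set F : ℕ → ℝ := fun k => if 2 * k ≤ n - 1 then 1 else 0 with hFdef
  have hF0 : ∀ k, 0 ≤ F k := fun k => by
    simp only [hFdef]; split_ifs <;> norm_num
  set B : ℝ := ∑ k ∈ Finset.range ((n - 1) + 1), ((n - 1).choose k : ℝ) * F k with hBdef
  set D : ℝ := (Fintype.card (TOmega n) : ℝ) with hDdef
  set t2 : ℝ := (2 : ℝ) ^ (n - 1) with ht2def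
  have ht2pos : 0 < t2 := by positivity
  have hDpos : 0 < D := by
    have h := Fintype.card_pos (α := TOmega n)
    rw [hDdef]; exact_mod_cast h
  -- per-omega bound
  have hω : ∀ ω : TOmega n, (tS ω : ℝ) ≤ ∑ v : Fin n, F ((tN1 ω v).ncard) := by
    intro ω
    rw [tS_eq_sum ω]
    refine Finset.sum_le_sum fun v _ => ?_
    by_cases h : tSeymour ω v
    · have h2 : 2 * (tN1 ω v).ncard ≤ n - 1 := seymour_deg_le h
      simp only [hFdef, if_pos h, if_pos h2]
      exact le_rfl
    · simp only [if_neg h]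
      exact hF0 _
  -- per-vertex evaluation
  have hv : ∀ v : Fin n, ∑ ω : TOmega n, F ((tN1 ω v).ncard) = (D / t2) * B := by
    intro v
    have h1 := sum_comp_bigEquiv F v
    have h2 := sum_boolfun {w : Fin n // w ≠ v} F
    rw [card_ne] at h2
    rw [h1, h2, ← hBdef]
    have hc : Fintype.card (TOmega n)
        = 2 ^ (n - 1) * Fintype.card ({p : Fin n × Fin n // ¬ relP v p} → Bool) := by
      rw [Fintype.card_congr (bigEquiv v), Fintype.card_prod, Fintype.card_fun,
        Fintype.card_bool, card_ne]
    have hc' : D = t2 * (Fintype.card ({p : Fin n × Fin n // ¬ relP v p} → Bool) : ℝ) := by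
      rw [hDdef, hc]; push_cast; ring
    rw [hc']
    field_simp
  -- sum bound
  have hsum : ∑ ω : TOmega n, (tS ω : ℝ) ≤ (n : ℝ) * ((D / t2) * B) := by
    calc ∑ ω : TOmega n, (tS ω : ℝ)
        ≤ ∑ ω : TOmega n, ∑ v : Fin n, F ((tN1 ω v).ncard) :=
          Finset.sum_le_sum fun ω _ => hω ω
      _ = ∑ v : Fin n, ∑ ω : TOmega n, F ((tN1 ω v).ncard) := Finset.sum_comm
      _ = ∑ _v : Fin n, (D / t2) * B := Finset.sum_congr rfl fun v _ => hv v
      _ = (n : ℝ) * ((D / t2) * B) := by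
          rw [Finset.sum_const, card_univ, Fintype.card_fin, nsmul_eq_mul]
  -- binomial cdf identity
  have hbin : binHalfCdf (n - 1) (((n : ℝ) - 1) / 2) = B / t2 := by
    rw [binHalfCdf, hBdef, Finset.sum_div]
    refine Finset.sum_congr rfl fun k _ => ?_
    have hiff : ((k : ℝ) ≤ ((n : ℝ) - 1) / 2) ↔ 2 * k ≤ n - 1 := by
      rw [le_div_iff₀ (by norm_num : (0:ℝ) < 2), ← hcast]
      constructor
      · intro h
        have h' : ((2 * k : ℕ) : ℝ) ≤ ((n - 1 : ℕ) : ℝ) := by push_cast; linarith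
        exact_mod_cast h'
      · intro h
        have h' : ((2 * k : ℕ) : ℝ) ≤ ((n - 1 : ℕ) : ℝ) := Nat.cast_le.2 h
        push_cast at h'; linarith
    by_cases hk : 2 * k ≤ n - 1
    · rw [if_pos (hiff.2 hk)]
      simp only [hFdef, if_pos hk, mul_one, ht2def]
      rw [div_pow, one_pow]
      ring
    · rw [if_neg (fun h => hk (hiff.1 h))]
      simp [hFdef, hk]
  -- conclude
  have hmain : tES n ≤ (n : ℝ) * binHalfCdf (n - 1) (((n : ℝ) - 1) / 2) := by
    rw [tES, tEx, ← hDdef, hbin]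
    rw [div_le_iff₀ hDpos]
    calc ∑ ω : TOmega n, (tS ω : ℝ) ≤ (n : ℝ) * ((D / t2) * B) := hsum
      _ = (n : ℝ) * (B / t2) * D := by field_simp
  have hnonneg : 0 ≤ ((n : ℝ) * ((n : ℝ) - 1) / 2) * (3 / 4 : ℝ) ^ (n - 2) := by
    have h2 : (2 : ℝ) ≤ (n : ℝ) := by exact_mod_cast hn
    have h1 : (0 : ℝ) ≤ (n : ℝ) - 1 := by linarith
    have := mul_nonneg (Nat.cast_nonneg n) h1
    positivity
  linarith
end

section
/- Let S_n be the number of Seymour vertices of the random tournament T_n on n vertices. Then E(S_n)/(n/2) → 1 as n → ∞; that is, E(S_n) = (n/2)(1+o(1)). -/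
open Finset

namespace SeyAux

variable {n : ℕ}

lemma card_TOmega_pos (n : ℕ) : 0 < (Fintype.card (TOmega n) : ℝ) := by
  exact_mod_cast Fintype.card_pos

lemma ind_nonneg (E : Set (TOmega n)) (ω) : 0 ≤ E.indicator (fun _ => (1:ℝ)) ω :=
  Set.indicator_nonneg (fun _ _ => zero_le_one) ω

lemma tPr_nonneg (E : Set (TOmega n)) : 0 ≤ tPr E :=
  div_nonneg (Finset.sum_nonneg fun ω _ => ind_nonneg E ω) (card_TOmega_pos n).le

lemma ind_mono {E F : Set (TOmega n)} (h : E ⊆ F) (ω) :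
    E.indicator (fun _ => (1:ℝ)) ω ≤ F.indicator (fun _ => (1:ℝ)) ω := by
  classical
  by_cases hE : ω ∈ E
  · rw [Set.indicator_of_mem hE, Set.indicator_of_mem (h hE)]
  · rw [Set.indicator_of_notMem hE]; exact ind_nonneg F ω

lemma tPr_mono {E F : Set (TOmega n)} (h : E ⊆ F) : tPr E ≤ tPr F :=
  div_le_div_of_nonneg_right (Finset.sum_le_sum fun ω _ => ind_mono h ω) (card_TOmega_pos n).le

lemma tPr_union_add_inter (E F : Set (TOmega n)) :
    tPr (E ∪ F) + tPr (E ∩ F) = tPr E + tPr F := by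
  classical
  unfold tPr
  rw [← add_div, ← add_div, ← Finset.sum_add_distrib, ← Finset.sum_add_distrib]
  congr 1
  apply Finset.sum_congr rfl
  intro ω _
  by_cases hE : ω ∈ E <;> by_cases hF : ω ∈ F <;>
    simp [Set.indicator_apply, hE, hF]

lemma tPr_empty : tPr (∅ : Set (TOmega n)) = 0 := by
  simp [tPr]

lemma tPr_univ : tPr (Set.univ : Set (TOmega n)) = 1 := by
  unfold tPr
  simp only [Set.indicator_univ, Finset.sum_const, nsmul_eq_mul, mul_one, Finset.card_univ]
  exact div_self (card_TOmega_pos n).ne'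

lemma tPr_union_le (E F : Set (TOmega n)) : tPr (E ∪ F) ≤ tPr E + tPr F := by
  have := tPr_union_add_inter E F
  have h2 := tPr_nonneg (E ∩ F)
  linarith

lemma tPr_diff_ge (E F : Set (TOmega n)) : tPr E - tPr F ≤ tPr (E \ F) := by
  have h1 : E ⊆ (E \ F) ∪ F := by
    intro x hx; by_cases hF : x ∈ F
    · exact Or.inr hF
    · exact Or.inl ⟨hx, hF⟩
  have := tPr_mono h1
  have := tPr_union_le (E \ F) F
  linarith

lemma tPr_iUnion_le {ι : Type*} [Fintype ι] (E : ι → Set (TOmega n)) :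
    tPr (⋃ i, E i) ≤ ∑ i, tPr (E i) := by
  classical
  unfold tPr
  rw [← Finset.sum_div]
  apply div_le_div_of_nonneg_right _ (card_TOmega_pos n).le
  rw [Finset.sum_comm]
  apply Finset.sum_le_sum
  intro ω _
  by_cases h : ω ∈ ⋃ i, E i
  · obtain ⟨i, hi⟩ := Set.mem_iUnion.mp h
    rw [Set.indicator_of_mem h]
    calc (1:ℝ) = (E i).indicator (fun _ => (1:ℝ)) ω := by rw [Set.indicator_of_mem hi]
    _ ≤ ∑ j, (E j).indicator (fun _ => (1:ℝ)) ω :=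
        Finset.single_le_sum (fun j _ => ind_nonneg (E j) ω) (Finset.mem_univ i)
  · rw [Set.indicator_of_notMem h]
    exact Finset.sum_nonneg fun j _ => ind_nonneg (E j) ω



/-! ### Key counting lemma -/

def boolFlip (a : Bool) : Bool ≃ Bool where
  toFun b := xor a b
  invFun b := xor a b
  left_inv b := by cases a <;> cases b <;> rfl
  right_inv b := by cases a <;> cases b <;> rfl

open Classical in
noncomputable def keyEquiv {ι : Type} [Fintype ι] (c : ι → Fin n × Fin n)
    (hc : Function.Injective c) (fl : ι → Bool) :
    TOmega n ≃ (ι → Bool) × ({p : Fin n × Fin n // p ∉ Set.range c} → Bool) :=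
  ((Equiv.curry (Fin n) (Fin n) Bool).symm).trans <|
    (Equiv.piEquivPiSubtypeProd (fun p : Fin n × Fin n => p ∈ Set.range c)
      (fun _ => Bool)).trans <|
    Equiv.prodCongr
      (((Equiv.arrowCongr (Equiv.ofInjective c hc) (Equiv.refl Bool)).symm).trans
        (Equiv.piCongrRight fun i => boolFlip (fl i)))
      (Equiv.refl _)

lemma keyEquiv_fst {ι : Type} [Fintype ι] (c : ι → Fin n × Fin n)
    (hc : Function.Injective c) (fl : ι → Bool) (ω : TOmega n) (i : ι) :
    (keyEquiv c hc fl ω).1 i = xor (fl i) (ω (c i).1 (c i).2) := rfl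

lemma key {ι : Type} [Fintype ι] [DecidableEq ι] (c : ι → Fin n × Fin n)
    (hc : Function.Injective c) (fl : ι → Bool) (G : Set (ι → Bool)) :
    tPr {ω : TOmega n | (fun i => xor (fl i) (ω (c i).1 (c i).2)) ∈ G} =
      (∑ g : ι → Bool, G.indicator (fun _ => (1 : ℝ)) g) / 2 ^ (Fintype.card ι) := by
  classical
  set R := ({p : Fin n × Fin n // p ∉ Set.range c} → Bool) with hRdef
  set e := keyEquiv c hc fl with hedef
  have hpt : ∀ ω : TOmega n,
      Set.indicator {ω : TOmega n | (fun i => xor (fl i) (ω (c i).1 (c i).2)) ∈ G}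
        (fun _ => (1:ℝ)) ω = G.indicator (fun _ => (1:ℝ)) (e ω).1 := by
    intro ω
    have hfst : (e ω).1 = fun i => xor (fl i) (ω (c i).1 (c i).2) := rfl
    simp only [Set.indicator_apply, Set.mem_setOf_eq, hfst]
  have hsum : (∑ ω : TOmega n,
      Set.indicator {ω : TOmega n | (fun i => xor (fl i) (ω (c i).1 (c i).2)) ∈ G}
        (fun _ => (1:ℝ)) ω)
      = (Fintype.card R : ℝ) * ∑ g : ι → Bool, G.indicator (fun _ => (1:ℝ)) g := by
    calc (∑ ω : TOmega n,
        Set.indicator {ω : TOmega n | (fun i => xor (fl i) (ω (c i).1 (c i).2)) ∈ G}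
          (fun _ => (1:ℝ)) ω)
        = ∑ ω : TOmega n, G.indicator (fun _ => (1:ℝ)) (e ω).1 :=
          Finset.sum_congr rfl fun ω _ => hpt ω
      _ = ∑ z : (ι → Bool) × R, G.indicator (fun _ => (1:ℝ)) z.1 :=
          Equiv.sum_comp e (fun z : (ι → Bool) × R => G.indicator (fun _ => (1:ℝ)) z.1)
      _ = (Fintype.card R : ℝ) * ∑ g : ι → Bool, G.indicator (fun _ => (1:ℝ)) g := by
          rw [Fintype.sum_prod_type]
          simp only [Finset.sum_const, Finset.card_univ, nsmul_eq_mul]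
          rw [← Finset.mul_sum]
  have hcard : (Fintype.card (TOmega n) : ℝ) = 2 ^ (Fintype.card ι) * (Fintype.card R : ℝ) := by
    rw [Fintype.card_congr e, Fintype.card_prod, Fintype.card_fun, Fintype.card_bool]
    push_cast
    ring
  have hRpos : (0:ℝ) < (Fintype.card R : ℝ) := by exact_mod_cast Fintype.card_pos
  unfold tPr
  rw [hsum, hcard]
  field_simp

/-! ### tadj basics -/

instance tadj_dec (ω : TOmega n) (i j : Fin n) : Decidable (tadj ω i j) := by
  unfold tadj; infer_instance

lemma tadj_irrefl (ω : TOmega n) (i : Fin n) : ¬ tadj ω i i := fun h => h.1 rfl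

lemma tadj_asymm {ω : TOmega n} {i j : Fin n} (h : tadj ω i j) : ¬ tadj ω j i := by
  obtain ⟨hne, h2⟩ := h
  rintro ⟨-, h3⟩
  rcases lt_or_gt_of_ne hne with hlt | hgt
  · rw [if_pos hlt] at h2
    rw [if_neg (asymm hlt)] at h3
    simp [h2] at h3
  · rw [if_neg (not_lt.mpr hgt.le)] at h2
    rw [if_pos hgt] at h3
    simp [h3] at h2

lemma tadj_total {ω : TOmega n} {i j : Fin n} (h : i ≠ j) : tadj ω i j ∨ tadj ω j i := by
  rcases lt_or_gt_of_ne h with hlt | hgt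
  · by_cases hb : ω i j = true
    · exact Or.inl ⟨h, by rw [if_pos hlt]; exact hb⟩
    · exact Or.inr ⟨h.symm, by rw [if_neg (asymm hlt)]; simpa using hb⟩
  · by_cases hb : ω j i = true
    · exact Or.inr ⟨h.symm, by rw [if_pos hgt]; exact hb⟩
    · exact Or.inl ⟨h, by rw [if_neg (asymm hgt)]; simpa using hb⟩

/-! ### The degree pattern at a vertex -/

def cV (v : Fin n) : {j : Fin n // j ≠ v} → Fin n × Fin n :=
  fun j => if v < j.val then (v, j.val) else (j.val, v)

def flV (v : Fin n) : {j : Fin n // j ≠ v} → Bool := fun j => !(decide (v < j.val))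

lemma patV_iff (v : Fin n) (ω : TOmega n) (j : {j : Fin n // j ≠ v}) :
    xor (flV v j) (ω (cV v j).1 (cV v j).2) = true ↔ tadj ω v j.val := by
  have hne : v ≠ j.val := Ne.symm j.2
  unfold flV cV tadj
  by_cases h : v < j.val <;> simp [h, hne]

lemma cV_inj (v : Fin n) : Function.Injective (cV v) := by
  intro a b hab
  unfold cV at hab
  by_cases h1 : v < a.val <;> by_cases h2 : v < b.val <;>
    simp only [h1, h2, if_true, if_false, if_pos, if_neg, Prod.mk.injEq] at hab <;>
    first
      | (exact Subtype.ext hab.2)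
      | (exact Subtype.ext hab.1)
      | (exact absurd hab.1.symm b.2)
      | (exact absurd hab.1 a.2)

lemma card_ne_v (v : Fin n) : Fintype.card {j : Fin n // j ≠ v} = n - 1 := by
  rw [Fintype.card_subtype_compl, Fintype.card_subtype_eq, Fintype.card_fin]

lemma ncard_N1_eq (v : Fin n) (ω : TOmega n) :
    (tN1 ω v).ncard =
      (univ.filter fun j : {j : Fin n // j ≠ v} =>
        xor (flV v j) (ω (cV v j).1 (cV v j).2) = true).card := by
  classical
  have h1 : (tN1 ω v).ncard = (univ.filter fun w : Fin n => tadj ω v w).card := by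
    rw [Set.ncard_eq_toFinset_card']
    congr 1
    ext w
    rw [Set.mem_toFinset]
    simp [tN1]
  rw [h1]
  symm
  apply Finset.card_bij (fun (j : {j : Fin n // j ≠ v}) _ => j.val)
  · intro a ha
    simp only [mem_filter, mem_univ, true_and] at ha ⊢
    exact (patV_iff v ω a).mp ha
  · intro a _ b _ hab
    exact Subtype.ext hab
  · intro w hw
    simp only [mem_filter, mem_univ, true_and] at hw
    exact ⟨⟨w, Ne.symm hw.1⟩,
      Finset.mem_filter.mpr ⟨mem_univ _, (patV_iff v ω ⟨w, Ne.symm hw.1⟩).mpr hw⟩, rfl⟩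

/-! ### Counting Boolean patterns -/

section Count

variable {ι : Type} [Fintype ι] [DecidableEq ι]

def cnt (g : ι → Bool) : ℕ := (univ.filter fun i => g i = true).card

omit [DecidableEq ι] in
lemma cnt_le (g : ι → Bool) : cnt g ≤ Fintype.card ι :=
  (Finset.card_filter_le _ _).trans (le_of_eq Finset.card_univ)

lemma cnt_not (g : ι → Bool) : cnt (fun i => !(g i)) = Fintype.card ι - cnt g := by
  unfold cnt
  have h1 : (univ.filter fun i => (!(g i)) = true) = univ.filter fun i => ¬ (g i = true) := by
    apply Finset.filter_congr
    intro i _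
    simp
  rw [h1, Finset.filter_not, Finset.card_sdiff_of_subset (Finset.filter_subset _ _), Finset.card_univ]

lemma card_fun_bool : Fintype.card (ι → Bool) = 2 ^ (Fintype.card ι) := by
  rw [Fintype.card_fun, Fintype.card_bool]

lemma count_le_two : 2 * (univ.filter fun g : ι → Bool => 2 * cnt g ≤ Fintype.card ι).card
    = 2 ^ (Fintype.card ι) + (univ.filter fun g : ι → Bool => 2 * cnt g = Fintype.card ι).card := by
  set k := Fintype.card ι
  have h1 : (univ.filter fun g : ι → Bool => 2 * cnt g ≤ k).card
      = (univ.filter fun g : ι → Bool => k ≤ 2 * cnt g).card := by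
    apply Finset.card_bij (fun (g : ι → Bool) _ => fun i => !(g i))
    · intro g hg
      simp only [mem_filter, mem_univ, true_and] at hg ⊢
      rw [cnt_not]
      have := cnt_le g
      omega
    · intro a _ b _ hab
      funext i
      have := congrFun hab i
      simpa using this
    · intro g hg
      simp only [mem_filter, mem_univ, true_and] at hg
      refine ⟨fun i => !(g i), ?_, by funext i; simp⟩
      simp only [mem_filter, mem_univ, true_and, cnt_not]
      have := cnt_le g
      omega
  have h2 : (univ.filter fun g : ι → Bool => k ≤ 2 * cnt g).card
      = (univ.filter fun g : ι → Bool => k < 2 * cnt g).card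
        + (univ.filter fun g : ι → Bool => 2 * cnt g = k).card := by
    rw [← Finset.card_union_of_disjoint]
    · congr 1
      ext g
      simp only [Finset.mem_union, mem_filter, mem_univ, true_and]
      omega
    · rw [Finset.disjoint_left]
      intro g hg hg'
      simp only [mem_filter, mem_univ, true_and] at hg hg'
      omega
  have h3 : (univ.filter fun g : ι → Bool => 2 * cnt g ≤ k).card
      + (univ.filter fun g : ι → Bool => k < 2 * cnt g).card = 2 ^ k := by
    have := Finset.card_filter_add_card_filter_not
      (s := (univ : Finset (ι → Bool))) (p := fun g => 2 * cnt g ≤ k)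
    rw [Finset.card_univ, card_fun_bool] at this
    rw [← this]
    congr 2
    apply Finset.filter_congr
    intro g _
    constructor
    · omega
    · omega
  omega

lemma count_eq_le_central :
    (univ.filter fun g : ι → Bool => 2 * cnt g = Fintype.card ι).card
      ≤ Nat.centralBinom (Fintype.card ι / 2) := by
  set k := Fintype.card ι
  by_cases hk : k % 2 = 1
  · have : (univ.filter fun g : ι → Bool => 2 * cnt g = k) = ∅ := by
      apply Finset.filter_false_of_mem
      intro g _
      omega
    rw [this]
    simp
  · have hk2 : 2 * (k / 2) = k := by omega
    calc (univ.filter fun g : ι → Bool => 2 * cnt g = k).card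
        ≤ (Finset.powersetCard (k / 2) (univ : Finset ι)).card := by
          apply Finset.card_le_card_of_injOn (fun g => univ.filter fun i => g i = true)
          · intro g hg
            simp only [mem_coe, mem_filter, mem_univ, true_and] at hg
            rw [Finset.mem_coe, Finset.mem_powersetCard]
            refine ⟨Finset.filter_subset _ _, ?_⟩
            unfold cnt at hg
            dsimp only
            omega
          · intro a ha b hb hab
            funext i
            have hab' : (univ.filter fun i => a i = true) = univ.filter fun i => b i = true := hab
            have : (i ∈ univ.filter fun i => a i = true) ↔ (i ∈ univ.filter fun i => b i = true) := by
              rw [hab']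
            simp only [mem_filter, mem_univ, true_and] at this
            rw [Bool.eq_iff_iff]
            exact this
      _ = Nat.centralBinom (k / 2) := by
          rw [Finset.card_powersetCard, Finset.card_univ, Nat.centralBinom]
          congr 1
          omega

end Count

/-! ### Central binomial decay -/

lemma cb_sq (m : ℕ) : (m + 1) * Nat.centralBinom m ^ 2 ≤ 4 ^ (2 * m) := by
  induction m with
  | zero => simp [Nat.centralBinom]
  | succ m ih =>
    set c := Nat.centralBinom m with hc
    set c' := Nat.centralBinom (m + 1) with hc'
    have key : (m + 1) * c' = 2 * (2 * m + 1) * c := Nat.succ_mul_centralBinom_succ m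
    have h1 : (m+1)^2 * ((m + 2) * c'^2) = 4 * (m+2) * (2*m+1)^2 * c^2 := by
      calc (m+1)^2 * ((m + 2) * c'^2) = (m+2) * ((m+1) * c')^2 := by ring
        _ = (m+2) * (2 * (2*m+1) * c)^2 := by rw [key]
        _ = 4 * (m+2) * (2*m+1)^2 * c^2 := by ring
    have h2 : 4 * (m+2) * (2*m+1)^2 ≤ 16 * (m+1)^3 := by nlinarith
    have h3 : (m+1)^2 * ((m + 2) * c'^2) ≤ (m+1)^2 * 4 ^ (2 * (m+1)) := by
      calc (m+1)^2 * ((m + 2) * c'^2) = 4 * (m+2) * (2*m+1)^2 * c^2 := h1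
        _ ≤ 16 * (m+1)^3 * c^2 := Nat.mul_le_mul_right _ h2
        _ = 16 * (m+1)^2 * ((m+1) * c^2) := by ring
        _ ≤ 16 * (m+1)^2 * 4 ^ (2*m) := Nat.mul_le_mul_left _ ih
        _ = (m+1)^2 * 4 ^ (2 * (m+1)) := by ring
    exact Nat.le_of_mul_le_mul_left h3 (by positivity)

/-! ### The main events -/

def AEv (v : Fin n) : Set (TOmega n) := {ω | 2 * (tN1 ω v).ncard ≤ n - 1}

def AeqEv (v : Fin n) : Set (TOmega n) := {ω | 2 * (tN1 ω v).ncard = n - 1}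

def Bad (v w : Fin n) : Set (TOmega n) :=
  {ω | tadj ω w v ∧ (∃ x, tadj ω v x) ∧ ∀ x, tadj ω v x → ¬ tadj ω x w}

lemma N1_disj_N2 (ω : TOmega n) (v : Fin n) : Disjoint (tN1 ω v) (tN2 ω v) :=
  Set.disjoint_left.mpr fun _ h1 h2 => h2.2.1 h1

lemma ncard_compl_eq (s : Set (Fin n)) : sᶜ.ncard = n - s.ncard := by
  have := Set.ncard_add_ncard_compl s
  rw [Nat.card_eq_fintype_card, Fintype.card_fin] at this
  omega

lemma N1_add_N2_le (ω : TOmega n) (v : Fin n) :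
    (tN1 ω v).ncard + (tN2 ω v).ncard ≤ n - 1 := by
  have hd := N1_disj_N2 ω v
  have hsub : tN1 ω v ∪ tN2 ω v ⊆ {v}ᶜ := by
    rintro w (h | h)
    · exact Ne.symm h.1
    · exact h.1
  calc (tN1 ω v).ncard + (tN2 ω v).ncard = (tN1 ω v ∪ tN2 ω v).ncard :=
        (Set.ncard_union_eq hd (Set.toFinite _) (Set.toFinite _)).symm
    _ ≤ ({v}ᶜ : Set (Fin n)).ncard := Set.ncard_le_ncard hsub (Set.toFinite _)
    _ = n - 1 := by rw [ncard_compl_eq, Set.ncard_singleton]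

lemma Sey_subset_A (v : Fin n) : {ω : TOmega n | tSeymour ω v} ⊆ AEv v := by
  intro ω hω
  have h1 := N1_add_N2_le ω v
  have h2 : (tN1 ω v).ncard ≤ (tN2 ω v).ncard := hω
  show 2 * (tN1 ω v).ncard ≤ n - 1
  omega

lemma lower_incl (v : Fin n) :
    AEv v ∩ (⋃ w, Bad v w)ᶜ ⊆ {ω : TOmega n | tSeymour ω v} := by
  rintro ω ⟨hA, hB⟩
  have hA' : 2 * (tN1 ω v).ncard ≤ n - 1 := hA
  by_cases hN : tN1 ω v = ∅
  · show (tN1 ω v).ncard ≤ (tN2 ω v).ncard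
    rw [hN]
    simp
  · have hx0 : ∃ x, tadj ω v x := by
      obtain ⟨x, hx⟩ := Set.nonempty_iff_ne_empty.mpr hN
      exact ⟨x, hx⟩
    have hsub2 : {w | tadj ω w v} ⊆ tN2 ω v := by
      intro w hw
      have hw' : tadj ω w v := hw
      have hwv : w ≠ v := hw'.1
      have hnadj : ¬ tadj ω v w := fun h => tadj_asymm h hw'
      have hnb : ω ∉ Bad v w := fun hb => hB (Set.mem_iUnion.mpr ⟨w, hb⟩)
      have hex : ¬ (∀ x, tadj ω v x → ¬ tadj ω x w) := fun hall => hnb ⟨hw', hx0, hall⟩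
      push_neg at hex
      obtain ⟨x, hx1, hx2⟩ := hex
      exact ⟨hwv, hnadj, x, hx1, hx2⟩
    have hcompl : {w | tadj ω w v} = ({v} ∪ tN1 ω v)ᶜ := by
      ext w
      simp only [Set.mem_setOf_eq, Set.mem_compl_iff, Set.mem_union, Set.mem_singleton_iff]
      constructor
      · intro h
        push_neg
        exact ⟨h.1, fun h' => tadj_asymm h' h⟩
      · intro h
        push_neg at h
        rcases tadj_total (Ne.symm h.1) with h' | h'
        · exact absurd h' h.2
        · exact h'
    have hvN1 : v ∉ tN1 ω v := tadj_irrefl ω v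
    have hcupp : ({v} ∪ tN1 ω v).ncard = 1 + (tN1 ω v).ncard := by
      rw [Set.ncard_union_eq (Set.disjoint_singleton_left.mpr hvN1)
        (Set.toFinite _) (Set.toFinite _), Set.ncard_singleton]
    have hd_le : (tN1 ω v).ncard ≤ n - 1 := by
      have := N1_add_N2_le ω v; omega
    have hcount : n - 1 - (tN1 ω v).ncard ≤ (tN2 ω v).ncard := by
      have h1 : ({v} ∪ tN1 ω v)ᶜ.ncard ≤ (tN2 ω v).ncard := by
        rw [← hcompl]
        exact Set.ncard_le_ncard hsub2 (Set.toFinite _)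
      rw [ncard_compl_eq, hcupp] at h1
      omega
    show (tN1 ω v).ncard ≤ (tN2 ω v).ncard
    omega

/-! ### Probability of the degree events -/

lemma sum_ind_eq_card {α : Type} [Fintype α] (p : α → Prop) [DecidablePred p] :
    (∑ g : α, Set.indicator {x | p x} (fun _ => (1:ℝ)) g) = ((univ.filter p).card : ℝ) := by
  classical
  have h : ∀ g, Set.indicator {x | p x} (fun _ => (1:ℝ)) g = if p g then 1 else 0 := by
    intro g
    by_cases hg : p g <;> simp [Set.indicator_apply, Set.mem_setOf_eq, hg]
  rw [Finset.sum_congr rfl fun g _ => h g]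
  rw [Finset.sum_boole]

lemma tPr_AEv (v : Fin n) :
    tPr (AEv v) = ((univ.filter fun g : {j : Fin n // j ≠ v} → Bool =>
        2 * cnt g ≤ n - 1).card : ℝ) / 2 ^ (n - 1) := by
  classical
  have hset : AEv v = {ω : TOmega n |
      (fun j : {j : Fin n // j ≠ v} => xor (flV v j) (ω (cV v j).1 (cV v j).2)) ∈
        {g : {j : Fin n // j ≠ v} → Bool | 2 * cnt g ≤ n - 1}} := by
    ext ω
    simp only [AEv, Set.mem_setOf_eq]
    rw [ncard_N1_eq v ω]
    rfl
  rw [hset, key (cV v) (cV_inj v) (flV v), sum_ind_eq_card, card_ne_v]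

lemma tPr_AeqEv (v : Fin n) :
    tPr (AeqEv v) = ((univ.filter fun g : {j : Fin n // j ≠ v} → Bool =>
        2 * cnt g = n - 1).card : ℝ) / 2 ^ (n - 1) := by
  classical
  have hset : AeqEv v = {ω : TOmega n |
      (fun j : {j : Fin n // j ≠ v} => xor (flV v j) (ω (cV v j).1 (cV v j).2)) ∈
        {g : {j : Fin n // j ≠ v} → Bool | 2 * cnt g = n - 1}} := by
    ext ω
    simp only [AeqEv, Set.mem_setOf_eq]
    rw [ncard_N1_eq v ω]
    rfl
  rw [hset, key (cV v) (cV_inj v) (flV v), sum_ind_eq_card, card_ne_v]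

lemma tPr_A_half (v : Fin n) : 2 * tPr (AEv v) = 1 + tPr (AeqEv v) := by
  classical
  rw [tPr_AEv, tPr_AeqEv]
  have hcl := count_le_two (ι := {j : Fin n // j ≠ v})
  rw [card_ne_v] at hcl
  have h2 : (0:ℝ) < 2 ^ (n-1) := by positivity
  have hR : (2:ℝ) * ((univ.filter fun g : {j : Fin n // j ≠ v} → Bool =>
      2 * cnt g ≤ n - 1).card : ℝ)
      = 2 ^ (n-1) + ((univ.filter fun g : {j : Fin n // j ≠ v} → Bool =>
      2 * cnt g = n - 1).card : ℝ) := by exact_mod_cast hcl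
  field_simp
  linarith [hR]

lemma tPr_AeqEv_le (v : Fin n) :
    tPr (AeqEv v) ≤ (Nat.centralBinom ((n-1)/2) : ℝ) / 2 ^ (n - 1) := by
  classical
  rw [tPr_AeqEv]
  gcongr
  have hcl := count_eq_le_central (ι := {j : Fin n // j ≠ v})
  rw [card_ne_v] at hcl
  exact_mod_cast hcl

/-! ### Probability of the bad events -/

def cW (v w : Fin n) : ({x : Fin n // x ≠ v ∧ x ≠ w} × Bool) → Fin n × Fin n :=
  fun p => if p.2 then (if p.1.val < w then (p.1.val, w) else (w, p.1.val))
           else (if v < p.1.val then (v, p.1.val) else (p.1.val, v))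

def flW (v w : Fin n) : ({x : Fin n // x ≠ v ∧ x ≠ w} × Bool) → Bool :=
  fun p => if p.2 then !(decide (p.1.val < w)) else !(decide (v < p.1.val))

lemma patW_false_iff (v w : Fin n) (ω : TOmega n) (x : {x : Fin n // x ≠ v ∧ x ≠ w}) :
    xor (flW v w (x, false)) (ω (cW v w (x, false)).1 (cW v w (x, false)).2) = true
      ↔ tadj ω v x.val := by
  have hne : v ≠ x.val := Ne.symm x.2.1
  unfold flW cW tadj
  by_cases h : v < x.val <;> simp [h, hne]

lemma patW_true_iff (v w : Fin n) (ω : TOmega n) (x : {x : Fin n // x ≠ v ∧ x ≠ w}) :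
    xor (flW v w (x, true)) (ω (cW v w (x, true)).1 (cW v w (x, true)).2) = true
      ↔ tadj ω x.val w := by
  have hne : x.val ≠ w := x.2.2
  unfold flW cW tadj
  by_cases h : x.val < w <;> simp [h, hne]

lemma cW_inj (v w : Fin n) (hvw : v ≠ w) : Function.Injective (cW v w) := by
  rintro ⟨⟨x, hxv, hxw⟩, bx⟩ ⟨⟨y, hyv, hyw⟩, byy⟩ h
  unfold cW at h
  dsimp only at h
  cases bx <;> cases byy <;> split_ifs at h <;>
    simp_all [Prod.mk.injEq, Subtype.ext_iff]

lemma card_ne2 (v w : Fin n) (hvw : v ≠ w) :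
    Fintype.card {x : Fin n // x ≠ v ∧ x ≠ w} = n - 2 := by
  rw [Fintype.card_subtype]
  have : (univ.filter fun x : Fin n => x ≠ v ∧ x ≠ w) = univ \ {v, w} := by
    ext x
    simp [Finset.mem_sdiff, not_or]
  rw [this, Finset.card_sdiff_of_subset (Finset.subset_univ _), Finset.card_univ, Fintype.card_fin,
    Finset.card_pair hvw]

lemma count_pair {σ : Type} [Fintype σ] [DecidableEq σ] :
    (univ.filter fun g : (σ × Bool) → Bool =>
      ∀ x : σ, g (x, false) = true → g (x, true) = false).card = 3 ^ Fintype.card σ := by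
  classical
  rw [← Fintype.card_subtype]
  have e1 : {g : (σ × Bool) → Bool // ∀ x : σ, g (x, false) = true → g (x, true) = false}
      ≃ (σ → {h : Bool → Bool // h false = true → h true = false}) := by
    refine (Equiv.subtypeEquiv (Equiv.curry σ Bool Bool) ?_).trans
      (Equiv.subtypePiEquivPi)
    intro g
    rfl
  rw [Fintype.card_congr e1, Fintype.card_fun]
  congr 1

lemma tPr_Bad_le (hn : 2 ≤ n) (v w : Fin n) : tPr (Bad v w) ≤ ((3:ℝ)/4) ^ (n-2) := by
  classical
  by_cases hvw : w = v
  · subst hvw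
    have hsub : Bad w w ⊆ (∅ : Set (TOmega n)) := fun ω hω => (tadj_irrefl ω w hω.1).elim
    calc tPr (Bad w w) ≤ tPr (∅ : Set (TOmega n)) := tPr_mono hsub
      _ = 0 := tPr_empty
      _ ≤ _ := by positivity
  · have hvw' : v ≠ w := Ne.symm hvw
    have hsub : Bad v w ⊆ {ω : TOmega n |
        (fun i : {x : Fin n // x ≠ v ∧ x ≠ w} × Bool =>
          xor (flW v w i) (ω (cW v w i).1 (cW v w i).2)) ∈
        {g : ({x : Fin n // x ≠ v ∧ x ≠ w} × Bool) → Bool |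
          ∀ x : {x : Fin n // x ≠ v ∧ x ≠ w}, g (x, false) = true → g (x, true) = false}} := by
      rintro ω ⟨h1, h2, h3⟩
      intro x hx
      have hvx : tadj ω v x.val := (patW_false_iff v w ω x).mp hx
      have hnxw : ¬ tadj ω x.val w := h3 x.val hvx
      have := (patW_true_iff v w ω x).not.mpr hnxw
      simpa using this
    have hc2 : Fintype.card ({x : Fin n // x ≠ v ∧ x ≠ w} × Bool) = (n - 2) * 2 := by
      rw [Fintype.card_prod, Fintype.card_bool, card_ne2 v w hvw']
    calc tPr (Bad v w) ≤ _ := tPr_mono hsub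
      _ = ((univ.filter fun g : ({x : Fin n // x ≠ v ∧ x ≠ w} × Bool) → Bool =>
            ∀ x : {x : Fin n // x ≠ v ∧ x ≠ w}, g (x, false) = true → g (x, true) = false).card : ℝ)
            / 2 ^ ((n - 2) * 2) := by
          rw [key (cW v w) (cW_inj v w hvw') (flW v w), sum_ind_eq_card, hc2]
      _ = ((3:ℝ) ^ (n-2)) / 2 ^ ((n-2) * 2) := by rw [count_pair, card_ne2 v w hvw']; push_cast; ring
      _ = ((3:ℝ)/4) ^ (n-2) := by
          rw [div_pow]
          congr 1
          rw [show ((4:ℝ)) = 2^2 by norm_num, ← pow_mul, mul_comm]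

lemma tPr_BadU_le (hn : 2 ≤ n) (v : Fin n) :
    tPr (⋃ w, Bad v w) ≤ (n:ℝ) * ((3:ℝ)/4) ^ (n-2) := by
  calc tPr (⋃ w, Bad v w) ≤ ∑ w : Fin n, tPr (Bad v w) := tPr_iUnion_le _
    _ ≤ ∑ _w : Fin n, ((3:ℝ)/4) ^ (n-2) :=
        Finset.sum_le_sum fun w _ => tPr_Bad_le hn v w
    _ = (n:ℝ) * ((3:ℝ)/4) ^ (n-2) := by
        rw [Finset.sum_const, Finset.card_univ, Fintype.card_fin, nsmul_eq_mul]

/-! ### Expectation decomposition -/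

lemma tES_eq_sum (n : ℕ) : tES n = ∑ v : Fin n, tPr {ω : TOmega n | tSeymour ω v} := by
  classical
  unfold tES tEx tPr
  rw [← Finset.sum_div]
  congr 1
  have hpt : ∀ ω : TOmega n, ((tS ω : ℕ) : ℝ)
      = ∑ v : Fin n, Set.indicator {ω' : TOmega n | tSeymour ω' v} (fun _ => (1:ℝ)) ω := by
    intro ω
    unfold tS
    rw [Set.ncard_eq_toFinset_card', Set.toFinset_setOf]
    rw [← Finset.sum_boole]
    push_cast
    apply Finset.sum_congr rfl
    intro v _
    by_cases h : tSeymour ω v <;> simp [Set.indicator_apply, Set.mem_setOf_eq, h]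
  rw [Finset.sum_congr rfl fun ω _ => hpt ω, Finset.sum_comm]

/-! ### central binomial bound -/

lemma central_bound (hn : 2 ≤ n) :
    (Nat.centralBinom ((n-1)/2) : ℝ) / 2 ^ (n - 1) ≤ 2 / Real.sqrt n := by
  set t := (n-1)/2 with ht
  have h2t : 2 * t ≤ n - 1 := by omega
  have hnpos : (0:ℝ) < Real.sqrt n := Real.sqrt_pos.mpr (by positivity)
  have htpos : (0:ℝ) < Real.sqrt ((t:ℝ)+1) := Real.sqrt_pos.mpr (by positivity)
  have h4 : (4:ℝ)^t ≤ 2^(n-1) := by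
    have h44 : (4:ℝ)^t = 2^(2*t) := by rw [pow_mul]; norm_num
    rw [h44]
    exact pow_le_pow_right₀ one_le_two h2t
  have h4pos : (0:ℝ) < 4^t := by positivity
  have hcb2 : ((t:ℝ)+1) * (Nat.centralBinom t : ℝ)^2 ≤ ((4:ℝ)^t)^2 := by
    have h := cb_sq t
    have h' : (((t+1) * Nat.centralBinom t ^ 2 : ℕ) : ℝ) ≤ ((4^(2*t) : ℕ) : ℝ) := by
      exact_mod_cast h
    push_cast at h'
    calc ((t:ℝ)+1) * (Nat.centralBinom t : ℝ)^2 ≤ (4:ℝ)^(2*t) := h'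
      _ = ((4:ℝ)^t)^2 := by rw [← pow_mul, mul_comm]
  have hcb : (Nat.centralBinom t : ℝ) ≤ 4^t / Real.sqrt ((t:ℝ)+1) := by
    rw [le_div_iff₀ htpos]
    have h := Real.sqrt_le_sqrt hcb2
    rw [Real.sqrt_mul (by positivity), Real.sqrt_sq (by positivity),
      Real.sqrt_sq (by positivity)] at h
    linarith [h]
  calc (Nat.centralBinom t : ℝ) / 2 ^ (n-1) ≤ (Nat.centralBinom t : ℝ) / 4^t := by
        gcongr
    _ ≤ (4^t / Real.sqrt ((t:ℝ)+1)) / 4^t := by gcongr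
    _ = 1 / Real.sqrt ((t:ℝ)+1) := by field_simp
    _ ≤ 2 / Real.sqrt n := by
        rw [div_le_div_iff₀ htpos hnpos]
        have h1 : Real.sqrt n ≤ Real.sqrt (4*((t:ℝ)+1)) := by
          apply Real.sqrt_le_sqrt
          have : (n:ℝ) ≤ 4*((t:ℝ)+1) := by
            have hh : n ≤ 4*(t+1) := by omega
            exact_mod_cast hh
          linarith
        have h2 : Real.sqrt (4*((t:ℝ)+1)) = 2 * Real.sqrt ((t:ℝ)+1) := by
          rw [show (4:ℝ)*((t:ℝ)+1) = (2:ℝ)^2 * ((t:ℝ)+1) by ring,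
            Real.sqrt_mul (by positivity), Real.sqrt_sq (by norm_num)]
        linarith

/-! ### Per-vertex bounds and assembly -/

lemma per_v_upper (hn : 2 ≤ n) (v : Fin n) :
    tPr {ω : TOmega n | tSeymour ω v} ≤ 1/2 + 1 / Real.sqrt n := by
  have h1 : tPr {ω : TOmega n | tSeymour ω v} ≤ tPr (AEv v) := tPr_mono (Sey_subset_A v)
  have h2 := tPr_A_half v
  have h3 := (tPr_AeqEv_le v).trans (central_bound hn)
  have h4 : (2:ℝ)/Real.sqrt n = 2*(1/Real.sqrt n) := by ring
  linarith

lemma per_v_lower (hn : 2 ≤ n) (v : Fin n) :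
    1/2 - (n:ℝ) * ((3:ℝ)/4)^(n-2) ≤ tPr {ω : TOmega n | tSeymour ω v} := by
  have h2 := tPr_A_half v
  have hAeq0 : 0 ≤ tPr (AeqEv v) := tPr_nonneg _
  have hU := tPr_BadU_le hn v
  have hdiff := tPr_diff_ge (AEv v) (⋃ w, Bad v w)
  have hmono : tPr (AEv v \ ⋃ w, Bad v w) ≤ tPr {ω : TOmega n | tSeymour ω v} := by
    apply tPr_mono
    rw [Set.diff_eq]
    exact lower_incl v
  linarith

lemma tES_lower (hn : 2 ≤ n) :
    (n:ℝ) * (1/2 - (n:ℝ) * ((3:ℝ)/4)^(n-2)) ≤ tES n := by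
  rw [tES_eq_sum]
  calc (n:ℝ) * (1/2 - (n:ℝ) * ((3:ℝ)/4)^(n-2))
      = ∑ _v : Fin n, (1/2 - (n:ℝ) * ((3:ℝ)/4)^(n-2)) := by
        rw [Finset.sum_const, Finset.card_univ, Fintype.card_fin, nsmul_eq_mul]
    _ ≤ ∑ v : Fin n, tPr {ω : TOmega n | tSeymour ω v} :=
        Finset.sum_le_sum fun v _ => per_v_lower hn v

lemma tES_upper (hn : 2 ≤ n) :
    tES n ≤ (n:ℝ) * (1/2 + 1 / Real.sqrt n) := by
  rw [tES_eq_sum]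
  calc ∑ v : Fin n, tPr {ω : TOmega n | tSeymour ω v}
      ≤ ∑ _v : Fin n, (1/2 + 1 / Real.sqrt n) :=
        Finset.sum_le_sum fun v _ => per_v_upper hn v
    _ = (n:ℝ) * (1/2 + 1 / Real.sqrt n) := by
        rw [Finset.sum_const, Finset.card_univ, Fintype.card_fin, nsmul_eq_mul]

end SeyAux

open SeyAux Filter in
theorem expected_seymour_asymptotic' :
    Filter.Tendsto (fun n : ℕ => tES n / ((n : ℝ) / 2)) Filter.atTop (nhds 1) := by
  have hsq : Tendsto (fun n : ℕ => 2 / Real.sqrt n) atTop (nhds 0) := by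
    have h1 : Tendsto (fun n : ℕ => Real.sqrt n) atTop atTop := by
      apply tendsto_atTop_atTop.mpr
      intro b
      refine ⟨⌈b^2⌉₊, fun n hn => ?_⟩
      have h2 : b^2 ≤ (n:ℝ) := (Nat.le_ceil _).trans (by exact_mod_cast hn)
      calc b ≤ |b| := le_abs_self b
        _ = Real.sqrt (b^2) := (Real.sqrt_sq_eq_abs b).symm
        _ ≤ Real.sqrt n := Real.sqrt_le_sqrt h2
    have h2 := h1.inv_tendsto_atTop
    have h3 := h2.const_mul (2:ℝ)
    simpa [div_eq_mul_inv] using h3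
  have hgeo : Tendsto (fun n : ℕ => 2 * (n:ℝ) * ((3:ℝ)/4)^(n-2)) atTop (nhds 0) := by
    have hb : Tendsto (fun m : ℕ => 2*((m:ℝ)+2) * ((3:ℝ)/4)^m) atTop (nhds 0) := by
      have hx : Tendsto (fun m : ℕ => (m:ℝ)^1 * ((3:ℝ)/4)^m) atTop (nhds 0) :=
        tendsto_pow_const_mul_const_pow_of_lt_one 1 (by norm_num) (by norm_num)
      have hy : Tendsto (fun m : ℕ => ((3:ℝ)/4)^m) atTop (nhds 0) :=
        tendsto_pow_atTop_nhds_zero_of_lt_one (by norm_num) (by norm_num)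
      have hz := (hx.const_mul (2:ℝ)).add (hy.const_mul (4:ℝ))
      have hz' : Tendsto (fun m : ℕ => 2*((m:ℝ)^1 * ((3:ℝ)/4)^m) + 4*((3:ℝ)/4)^m)
          atTop (nhds 0) := by simpa using hz
      exact hz'.congr fun m => by ring
    have hcomp := hb.comp (tendsto_sub_atTop_nat 2)
    apply hcomp.congr'
    filter_upwards [eventually_ge_atTop 2] with n hn
    show 2*(((n - 2 : ℕ):ℝ)+2) * ((3:ℝ)/4)^(n-2) = 2 * (n:ℝ) * ((3:ℝ)/4)^(n-2)
    rw [Nat.cast_sub hn]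
    ring
  have hlow : Tendsto (fun n : ℕ => 1 - 2*(n:ℝ)*((3:ℝ)/4)^(n-2)) atTop (nhds 1) := by
    have := (tendsto_const_nhds (x := (1:ℝ)) (f := atTop)).sub hgeo
    simpa using this
  have hup : Tendsto (fun n : ℕ => 1 + 2/Real.sqrt n) atTop (nhds 1) := by
    have := (tendsto_const_nhds (x := (1:ℝ)) (f := atTop)).add hsq
    simpa using this
  apply tendsto_of_tendsto_of_tendsto_of_le_of_le' hlow hup
  · filter_upwards [eventually_ge_atTop 2] with n hn
    have hb := tES_lower (n := n) hn
    have hn2 : (2:ℝ) ≤ (n:ℝ) := by exact_mod_cast hn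
    have hnpos : (0:ℝ) < (n:ℝ)/2 := by linarith
    rw [le_div_iff₀ hnpos]
    calc (1 - 2*(n:ℝ)*((3:ℝ)/4)^(n-2)) * ((n:ℝ)/2)
        = (n:ℝ) * (1/2 - (n:ℝ) * ((3:ℝ)/4)^(n-2)) := by ring
      _ ≤ tES n := hb
  · filter_upwards [eventually_ge_atTop 2] with n hn
    have hb := tES_upper (n := n) hn
    have hn2 : (2:ℝ) ≤ (n:ℝ) := by exact_mod_cast hn
    have hnpos : (0:ℝ) < (n:ℝ)/2 := by linarith
    rw [div_le_iff₀ hnpos]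
    calc tES n ≤ (n:ℝ) * (1/2 + 1 / Real.sqrt n) := hb
      _ = (1 + 2/Real.sqrt n) * ((n:ℝ)/2) := by ring

/-- The expected number of Seymour vertices of the random tournament on `n` vertices
satisfies `E(S_n) = (n/2)(1 + o(1))`, i.e. `E(S_n) / (n/2) → 1` as `n → ∞`. -/
theorem expected_seymour_asymptotic :
    Filter.Tendsto (fun n : ℕ => tES n / ((n : ℝ) / 2)) Filter.atTop (nhds 1) := by
  exact expected_seymour_asymptotic'
end
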